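/- In the one-hidden-layer ReLU ANN setting with constant target α, let Θ : Ω × ℕ_0 → ℝ^{3H+1} be a stochastic process on a probability space (Ω, F, P) with Θ_0(Ω) ⊆ [−c,c]^{3H+1} for some c > 0, satisfying Θ_{n+1} = Θ_n − γ G(Θ_n) with γ ∈ (0, (12c²(3H+1) + 32α² + 2)^{-1}]. Then sup_{ω∈Ω} sup_{n∈ℕ_0} ‖Θ_n(ω)‖ ≤ (3c²(3H+1) + 8α²)^{1/2}, for every ω ∈ Ω it holds limsup_{n→∞} L_∞(Θ_n(ω)) = 0, and limsup_{n→∞} E[L_∞(Θ_n)] = 0. -/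

import Mathlib

open MeasureTheory

noncomputable section

/-- weight parameters -/
def wp (H : ℕ) (φ : EuclideanSpace ℝ (Fin (3*H+1))) (j : Fin H) : ℝ := φ ⟨j.1, by omega⟩
/-- bias parameters -/
def bp (H : ℕ) (φ : EuclideanSpace ℝ (Fin (3*H+1))) (j : Fin H) : ℝ := φ ⟨H + j.1, by omega⟩
/-- outer weight parameters -/
def vp (H : ℕ) (φ : EuclideanSpace ℝ (Fin (3*H+1))) (j : Fin H) : ℝ := φ ⟨2*H + j.1, by omega⟩
/-- output bias -/
def cp (H : ℕ) (φ : EuclideanSpace ℝ (Fin (3*H+1))) : ℝ := φ ⟨3*H, by omega⟩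

/-- realization of the one-hidden-layer ReLU network -/
def realization (H : ℕ) (φ : EuclideanSpace ℝ (Fin (3*H+1))) (x : ℝ) : ℝ :=
  cp H φ + ∑ j : Fin H, vp H φ j * max (wp H φ j * x + bp H φ j) 0

/-- risk with constant target α -/
def risk (H : ℕ) (α : ℝ) (φ : EuclideanSpace ℝ (Fin (3*H+1))) : ℝ :=
  ∫ y in (0:ℝ)..1, (realization H φ y - α)^2

/-- activity interval I_j^φ -/
def actSet (H : ℕ) (φ : EuclideanSpace ℝ (Fin (3*H+1))) (j : Fin H) : Set ℝ :=
  {x | x ∈ Set.Icc (0:ℝ) 1 ∧ 0 < wp H φ j * x + bp H φ j}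

/-- generalized gradient G -/
def grad (H : ℕ) (α : ℝ) (φ : EuclideanSpace ℝ (Fin (3*H+1))) :
    EuclideanSpace ℝ (Fin (3*H+1)) := WithLp.toLp 2 fun (i : Fin (3*H+1)) =>
  if h : i.1 < H then
    2 * vp H φ ⟨i.1, h⟩ * ∫ x in actSet H φ ⟨i.1, h⟩, x * (realization H φ x - α)
  else if h2 : i.1 < 2*H then
    2 * vp H φ ⟨i.1 - H, by omega⟩ * ∫ x in actSet H φ ⟨i.1 - H, by omega⟩, (realization H φ x - α)
  else if h3 : i.1 < 3*H then
    2 * ∫ x in (0:ℝ)..1,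
      max (wp H φ ⟨i.1 - 2*H, by omega⟩ * x + bp H φ ⟨i.1 - 2*H, by omega⟩) 0 * (realization H φ x - α)
  else 2 * ∫ x in (0:ℝ)..1, (realization H φ x - α)

/-- Lyapunov function V -/
def lyap (H : ℕ) (α : ℝ) (φ : EuclideanSpace ℝ (Fin (3*H+1))) : ℝ :=
  ‖φ‖^2 + (cp H φ - 2*α)^2

open Finset in
theorem fin_sum_split (H:ℕ) (F : Fin (3*H+1) → ℝ) :
    ∑ i, F i = (∑ j : Fin H, F ⟨j.1, by omega⟩) + (∑ j : Fin H, F ⟨H + j.1, by omega⟩)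
      + (∑ j : Fin H, F ⟨2*H + j.1, by omega⟩) + F ⟨3*H, by omega⟩ := by
  classical
  set G : ℕ → ℝ := fun i => if h : i < 3*H+1 then F ⟨i, h⟩ else 0 with hG
  have h1 : ∑ i, F i = ∑ i ∈ range (3*H+1), G i := by
    rw [← Fin.sum_univ_eq_sum_range]
    exact Finset.sum_congr rfl fun i _ => by simp [hG, i.2]; intro h; have := i.2; omega
  have e : ∑ i ∈ range (3*H+1), G i = ∑ i ∈ range (H+(H+(H+1))), G i := by
    congr 2; omega
  rw [h1, e, Finset.sum_range_add, Finset.sum_range_add, Finset.sum_range_add,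
    Finset.sum_range_one]
  have c1 : ∑ i ∈ range H, G i = ∑ j : Fin H, F ⟨j.1, by omega⟩ := by
    rw [← Fin.sum_univ_eq_sum_range (fun i => G i) H]
    exact Finset.sum_congr rfl fun j _ => by
      simp only [hG]; rw [dif_pos (show (j:ℕ) < 3*H+1 by omega)]
  have c2 : ∑ i ∈ range H, G (H+i) = ∑ j : Fin H, F ⟨H + j.1, by omega⟩ := by
    rw [← Fin.sum_univ_eq_sum_range (fun i => G (H+i)) H]
    exact Finset.sum_congr rfl fun j _ => by
      simp only [hG]; rw [dif_pos (show H+(j:ℕ) < 3*H+1 by omega)]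
  have c3 : ∑ i ∈ range H, G (H+(H+i)) = ∑ j : Fin H, F ⟨2*H + j.1, by omega⟩ := by
    rw [← Fin.sum_univ_eq_sum_range (fun i => G (H+(H+i))) H]
    refine Finset.sum_congr rfl fun j _ => ?_
    simp only [hG]; rw [dif_pos (show H+(H+(j:ℕ)) < 3*H+1 by omega)]
    have h : H+(H+(j:ℕ)) = 2*H+(j:ℕ) := by omega
    simp only [h]
  have c4 : G (H+(H+(H+0))) = F ⟨3*H, by omega⟩ := by
    simp only [hG]; rw [dif_pos (show H+(H+(H+0)) < 3*H+1 by omega)]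
    have h : H+(H+(H+0)) = 3*H := by omega
    simp only [h]
  rw [c1, c2, c3, c4]; ring


variable {H : ℕ} {α : ℝ} {φ : EuclideanSpace ℝ (Fin (3*H+1))}

theorem grad_w (j : Fin H) : grad H α φ ⟨j.1, by omega⟩ =
    2 * vp H φ j * ∫ x in actSet H φ j, x * (realization H φ x - α) := by
  show dite (j.1 < H) _ _ = _
  rw [dif_pos j.2]
theorem grad_b (j : Fin H) : grad H α φ ⟨H + j.1, by omega⟩ =
    2 * vp H φ j * ∫ x in actSet H φ j, (realization H φ x - α) := by
  show dite (H + j.1 < H) _ _ = _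
  rw [dif_neg (show ¬(H + j.1 < H) by omega), dif_pos (show H + j.1 < 2*H by omega)]
  have h : H + j.1 - H = j.1 := by omega
  simp only [h]
theorem grad_v (j : Fin H) : grad H α φ ⟨2*H + j.1, by omega⟩ =
    2 * ∫ x in (0:ℝ)..1, max (wp H φ j * x + bp H φ j) 0 * (realization H φ x - α) := by
  show dite (2*H + j.1 < H) _ _ = _
  rw [dif_neg (show ¬(2*H + j.1 < H) by omega), dif_neg (show ¬(2*H + j.1 < 2*H) by omega), dif_pos (show 2*H + j.1 < 3*H by omega)]
  have h : 2*H + j.1 - 2*H = j.1 := by omega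
  simp only [h]
theorem grad_c : grad H α φ ⟨3*H, by omega⟩ =
    2 * ∫ x in (0:ℝ)..1, (realization H φ x - α) := by
  show dite (3*H < H) _ _ = _
  rw [dif_neg (show ¬(3*H < H) by omega), dif_neg (show ¬(3*H < 2*H) by omega), dif_neg (show ¬(3*H < 3*H) by omega)]

theorem cont_real : Continuous (fun x => realization H φ x - α) := by
  unfold realization
  fun_prop

theorem actSet_eq (j : Fin H) :
    actSet H φ j = Set.Icc (0:ℝ) 1 ∩ {x | 0 < wp H φ j * x + bp H φ j} := rfl

theorem meas_actSet (j : Fin H) : MeasurableSet (actSet H φ j) := by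
  rw [actSet_eq]
  exact measurableSet_Icc.inter (measurableSet_lt measurable_const (by fun_prop))

theorem actSet_subset (j : Fin H) : actSet H φ j ⊆ Set.Icc (0:ℝ) 1 := fun x hx => hx.1

theorem integrableOn_acts {g : ℝ → ℝ} (hg : Continuous g) (s : Set ℝ)
    (hs : s ⊆ Set.Icc (0:ℝ) 1) : IntegrableOn g s := by
  exact (hg.integrableOn_Icc).mono_set hs

/-- Cauchy–Schwarz for set integrals of continuous functions on subsets of [0,1]. -/
theorem cs_int (s : Set ℝ) (hs : MeasurableSet s) (hsub : s ⊆ Set.Icc (0:ℝ) 1)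
    {g f : ℝ → ℝ} (hg : Continuous g) (hf : Continuous f) :
    (∫ x in s, g x * f x)^2 ≤ (∫ x in s, (g x)^2) * (∫ x in s, (f x)^2) := by
  set A := ∫ x in s, (g x)^2
  set B := ∫ x in s, (f x)^2
  set C := ∫ x in s, g x * f x
  have key : ∀ t : ℝ, 0 ≤ A * (t*t) + (2*C) * t + B := by
    intro t
    have h0 : 0 ≤ ∫ x in s, (t * g x + f x)^2 :=
      setIntegral_nonneg hs (fun x _ => sq_nonneg _)
    have hexp : ∫ x in s, (t * g x + f x)^2
        = t^2 * A + t * (2*C) + B := by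
      have e : ∀ x, (t * g x + f x)^2 = t^2 * (g x)^2 + t * (2*(g x * f x)) + (f x)^2 := by
        intro x; ring
      have I1 : IntegrableOn (fun x => t^2 * (g x)^2) s := by
        exact (continuous_const.mul (hg.pow 2)).integrableOn_Icc.mono_set hsub
      have I2 : IntegrableOn (fun x => t * (2 * (g x * f x))) s := by
        exact (continuous_const.mul (continuous_const.mul (hg.mul hf))).integrableOn_Icc.mono_set hsub
      have I3 : IntegrableOn (fun x => (f x)^2) s := by
        exact (hf.pow 2).integrableOn_Icc.mono_set hsub
      have I12 : IntegrableOn (fun x => t ^ 2 * g x ^ 2 + t * (2 * (g x * f x))) s volume := I1.add I2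
      simp_rw [e]
      rw [integral_add I12 I3, integral_add I1 I2, integral_const_mul,
        integral_const_mul, integral_const_mul]
    calc (0:ℝ) ≤ ∫ x in s, (t * g x + f x)^2 := h0
    _ = t^2 * A + t * (2*C) + B := hexp
    _ = A * (t*t) + (2*C) * t + B := by ring
  have := discrim_le_zero key
  rw [discrim] at this
  nlinarith [this]

theorem interval_to_Icc {h : ℝ → ℝ} :
    ∫ x in (0:ℝ)..1, h x = ∫ x in Set.Icc (0:ℝ) 1, h x := by
  rw [intervalIntegral.integral_of_le zero_le_one, integral_Icc_eq_integral_Ioc]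

theorem riskIcc : risk H α φ = ∫ x in Set.Icc (0:ℝ) 1, (realization H φ x - α)^2 := by
  rw [risk, interval_to_Icc]

theorem risk_nonneg : 0 ≤ risk H α φ := by
  rw [riskIcc]
  exact setIntegral_nonneg measurableSet_Icc (fun x _ => sq_nonneg _)

theorem keyJ (j : Fin H) :
    wp H φ j * (∫ x in actSet H φ j, x * (realization H φ x - α))
      + bp H φ j * (∫ x in actSet H φ j, (realization H φ x - α))
    = ∫ x in (0:ℝ)..1, max (wp H φ j * x + bp H φ j) 0 * (realization H φ x - α) := by
  set f : ℝ → ℝ := fun x => realization H φ x - α with hf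
  have hfc : Continuous f := cont_real
  set w := wp H φ j; set b := bp H φ j
  have hS : MeasurableSet {x : ℝ | 0 < w * x + b} :=
    measurableSet_lt measurable_const (by fun_prop)
  have hI : MeasurableSet (actSet H φ j) := meas_actSet j
  have hsub := actSet_subset (φ := φ) j
  have i1 : IntegrableOn (fun x => w * (x * f x)) (actSet H φ j) :=
    (continuous_const.mul (continuous_id.mul hfc)).integrableOn_Icc.mono_set hsub
  have i2 : IntegrableOn (fun x => b * f x) (actSet H φ j) :=
    (continuous_const.mul hfc).integrableOn_Icc.mono_set hsub
  have lhs_eq : ∫ x in actSet H φ j, (w * x + b) * f x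
      = w * (∫ x in actSet H φ j, x * f x) + b * ∫ x in actSet H φ j, f x := by
    rw [setIntegral_congr_fun (g := fun x => w * (x * f x) + b * f x) hI (fun x _ => by ring),
      integral_add i1 i2, integral_const_mul, integral_const_mul]
  rw [← lhs_eq, interval_to_Icc]
  have split : ∫ x in Set.Icc (0:ℝ) 1, max (w * x + b) 0 * f x
      = (∫ x in Set.Icc (0:ℝ) 1 ∩ {x : ℝ | 0 < w * x + b}, max (w * x + b) 0 * f x)
        + ∫ x in Set.Icc (0:ℝ) 1 \ {x : ℝ | 0 < w * x + b}, max (w * x + b) 0 * f x :=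
    (integral_inter_add_diff hS
      ((((continuous_const.mul continuous_id).add continuous_const).max
        continuous_const).mul hfc).integrableOn_Icc).symm
  rw [split]
  have h2 : ∫ x in Set.Icc (0:ℝ) 1 \ {x : ℝ | 0 < w * x + b}, max (w * x + b) 0 * f x = 0 := by
    apply setIntegral_eq_zero_of_forall_eq_zero
    intro x hx
    have : max (w * x + b) 0 = 0 := max_eq_right (by simpa using hx.2)
    rw [this, zero_mul]
  rw [h2, add_zero]
  exact (setIntegral_congr_fun hI (fun x hx => by
    rw [max_eq_left (le_of_lt hx.2)])).symm

theorem risk_split :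
    (∑ j : Fin H, vp H φ j *
        ∫ x in (0:ℝ)..1, max (wp H φ j * x + bp H φ j) 0 * (realization H φ x - α))
      + (cp H φ - α) * ∫ x in (0:ℝ)..1, (realization H φ x - α)
    = risk H α φ := by
  set f : ℝ → ℝ := fun x => realization H φ x - α with hf
  have hfc : Continuous f := cont_real
  have hint : ∀ j : Fin H, IntervalIntegrable
      (fun x => vp H φ j * (max (wp H φ j * x + bp H φ j) 0 * f x)) volume 0 1 := by
    intro j
    exact (continuous_const.mul ((((continuous_const.mul continuous_id).add
      continuous_const).max continuous_const).mul hfc)).intervalIntegrable 0 1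
  have e1 : ∀ j : Fin H, vp H φ j * ∫ x in (0:ℝ)..1, max (wp H φ j * x + bp H φ j) 0 * f x
      = ∫ x in (0:ℝ)..1, vp H φ j * (max (wp H φ j * x + bp H φ j) 0 * f x) := by
    intro j; rw [intervalIntegral.integral_const_mul]
  rw [Finset.sum_congr rfl fun j _ => e1 j]
  have hsum : IntervalIntegrable
      (fun x => ∑ j : Fin H, vp H φ j * (max (wp H φ j * x + bp H φ j) 0 * f x)) volume 0 1 :=
    (continuous_finset_sum _ (fun j _ => continuous_const.mul ((((continuous_const.mul
      continuous_id).add continuous_const).max continuous_const).mul hfc))).intervalIntegrable 0 1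
  have hcf : IntervalIntegrable (fun x => (cp H φ - α) * f x) volume 0 1 :=
    (continuous_const.mul hfc).intervalIntegrable 0 1
  rw [← intervalIntegral.integral_finset_sum (fun j _ => hint j),
    ← intervalIntegral.integral_const_mul, ← intervalIntegral.integral_add hsum hcf]
  rw [risk]
  apply intervalIntegral.integral_congr
  intro x _
  have hx : f x = (cp H φ - α) + ∑ j : Fin H, vp H φ j * max (wp H φ j * x + bp H φ j) 0 := by
    simp only [hf, realization]; ring
  calc (∑ j : Fin H, vp H φ j * (max (wp H φ j * x + bp H φ j) 0 * f x)) + (cp H φ - α) * f x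
      = ((cp H φ - α) + ∑ j : Fin H, vp H φ j * max (wp H φ j * x + bp H φ j) 0) * f x := by
        rw [add_mul, Finset.sum_mul]
        simp_rw [mul_assoc]
        ring
    _ = f x * f x := by rw [← hx]
    _ = (realization H φ x - α)^2 := by rw [hf]; ring

theorem inner_grad_eq :
    2 * (inner ℝ φ (grad H α φ) : ℝ) + 2 * (cp H φ - 2*α) * grad H α φ ⟨3*H, by omega⟩
      = 8 * risk H α φ := by
  have hip : (inner ℝ φ (grad H α φ) : ℝ) = ∑ i, φ i * grad H α φ i := by
    simp [PiLp.inner_apply, RCLike.inner_apply, mul_comm]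
  rw [hip, fin_sum_split H (fun i => φ i * grad H α φ i)]
  have hw : ∀ j : Fin H, φ ⟨j.1, by omega⟩ = wp H φ j := fun j => rfl
  have hb : ∀ j : Fin H, φ ⟨H + j.1, by omega⟩ = bp H φ j := fun j => rfl
  have hv : ∀ j : Fin H, φ ⟨2*H + j.1, by omega⟩ = vp H φ j := fun j => rfl
  have hc : φ ⟨3*H, by omega⟩ = cp H φ := rfl
  simp only [hw, hb, hv, hc, grad_w, grad_b, grad_v, grad_c]
  have comb : (∑ j : Fin H, wp H φ j * (2 * vp H φ j *
        ∫ x in actSet H φ j, x * (realization H φ x - α)))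
      + (∑ j : Fin H, bp H φ j * (2 * vp H φ j *
        ∫ x in actSet H φ j, (realization H φ x - α)))
      = 2 * ∑ j : Fin H, vp H φ j *
          ∫ x in (0:ℝ)..1, max (wp H φ j * x + bp H φ j) 0 * (realization H φ x - α) := by
    rw [← Finset.sum_add_distrib, Finset.mul_sum]
    refine Finset.sum_congr rfl fun j _ => ?_
    have := keyJ (φ := φ) (α := α) j
    calc wp H φ j * (2 * vp H φ j * ∫ x in actSet H φ j, x * (realization H φ x - α))
        + bp H φ j * (2 * vp H φ j * ∫ x in actSet H φ j, (realization H φ x - α))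
        = 2 * vp H φ j * (wp H φ j * (∫ x in actSet H φ j, x * (realization H φ x - α))
          + bp H φ j * (∫ x in actSet H φ j, (realization H φ x - α))) := by ring
      _ = 2 * (vp H φ j * ∫ x in (0:ℝ)..1,
            max (wp H φ j * x + bp H φ j) 0 * (realization H φ x - α)) := by rw [this]; ring
  have hv2 : ∑ j : Fin H, vp H φ j * (2 * ∫ x in (0:ℝ)..1,
        max (wp H φ j * x + bp H φ j) 0 * (realization H φ x - α))
      = 2 * ∑ j : Fin H, vp H φ j * ∫ x in (0:ℝ)..1,
          max (wp H φ j * x + bp H φ j) 0 * (realization H φ x - α) := by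
    rw [Finset.mul_sum]; exact Finset.sum_congr rfl fun j _ => by ring
  have hr := risk_split (φ := φ) (α := α)
  set S := ∑ j : Fin H, vp H φ j *
      ∫ x in (0:ℝ)..1, max (wp H φ j * x + bp H φ j) 0 * (realization H φ x - α)
  set T := ∫ x in (0:ℝ)..1, (realization H φ x - α)
  -- goal now: 2 * (S2w+b + v-part + c-part) + ... = 8 risk
  calc 2 * ((∑ j : Fin H, wp H φ j * (2 * vp H φ j *
        ∫ x in actSet H φ j, x * (realization H φ x - α)))
      + (∑ j : Fin H, bp H φ j * (2 * vp H φ j *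
        ∫ x in actSet H φ j, (realization H φ x - α)))
      + (∑ j : Fin H, vp H φ j * (2 * ∫ x in (0:ℝ)..1,
        max (wp H φ j * x + bp H φ j) 0 * (realization H φ x - α)))
      + cp H φ * (2 * T)) + 2 * (cp H φ - 2*α) * (2 * T)
      = 2 * ((2*S) + (2*S) + cp H φ * (2*T)) + 2*(cp H φ - 2*α)*(2*T) := by
        rw [comb, hv2]
    _ = 8 * (S + (cp H φ - α) * T) := by ring
    _ = 8 * risk H α φ := by rw [hr]

theorem sq_setint_le (s : Set ℝ) (hs : MeasurableSet s) (hsub : s ⊆ Set.Icc (0:ℝ) 1)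
    {g : ℝ → ℝ} (hg : Continuous g) (M : ℝ)
    (hM : ∀ x ∈ Set.Icc (0:ℝ) 1, (g x)^2 ≤ M) :
    (∫ x in s, g x * (realization H φ x - α))^2 ≤ M * risk H α φ := by
  have hfc : Continuous (fun x => realization H φ x - α) := cont_real (α := α)
  have h1 := cs_int s hs hsub hg hfc
  have hM0 : 0 ≤ M := le_trans (sq_nonneg (g 0)) (hM 0 (by norm_num))
  have h2 : (∫ x in s, (g x)^2) ≤ M := by
    have hvol : (volume s).toReal ≤ 1 := by
      have : volume s ≤ volume (Set.Icc (0:ℝ) 1) := measure_mono hsub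
      rw [Real.volume_Icc] at this
      calc (volume s).toReal ≤ (ENNReal.ofReal (1-0)).toReal :=
        ENNReal.toReal_mono (by simp) this
        _ = 1 := by norm_num
    calc ∫ x in s, (g x)^2
        ≤ ∫ _x in s, M := setIntegral_mono_on
          ((hg.pow 2).integrableOn_Icc.mono_set hsub)
          (integrableOn_const (lt_of_le_of_lt (measure_mono hsub) (by
            rw [Real.volume_Icc]; exact ENNReal.ofReal_lt_top)).ne)
          hs (fun x hx => hM x (hsub hx))
      _ = (volume s).toReal * M := by rw [setIntegral_const]; simp [smul_eq_mul, measureReal_def]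
      _ ≤ 1 * M := by exact mul_le_mul_of_nonneg_right hvol hM0
      _ = M := one_mul M
  have h3 : (∫ x in s, (realization H φ x - α)^2) ≤ risk H α φ := by
    rw [riskIcc]
    exact setIntegral_mono_set ((hfc.pow 2).integrableOn_Icc)
      (Filter.Eventually.of_forall fun x => sq_nonneg _)
      (HasSubset.Subset.eventuallyLE hsub)
  have h4 : 0 ≤ ∫ x in s, (g x)^2 := setIntegral_nonneg hs fun x _ => sq_nonneg _
  have h5 : 0 ≤ ∫ x in s, (realization H φ x - α)^2 :=
    setIntegral_nonneg hs fun x _ => sq_nonneg _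
  calc (∫ x in s, g x * (realization H φ x - α))^2
      ≤ (∫ x in s, (g x)^2) * (∫ x in s, (realization H φ x - α)^2) := h1
    _ ≤ M * risk H α φ := mul_le_mul h2 h3 h5 hM0

theorem grad_norm_sq_le :
    ‖grad H α φ‖^2 ≤ (8 * ‖φ‖^2 + 4) * risk H α φ := by
  have hnorm : ∀ ψ : EuclideanSpace ℝ (Fin (3*H+1)), ‖ψ‖^2 = ∑ i, (ψ i)^2 := by
    intro ψ
    rw [EuclideanSpace.real_norm_sq_eq]
  have hr0 : 0 ≤ risk H α φ := risk_nonneg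
  rw [hnorm, fin_sum_split H (fun i => (grad H α φ i)^2)]
  simp only [grad_w, grad_b, grad_v, grad_c]
  have bw : ∀ j : Fin H, (2 * vp H φ j * ∫ x in actSet H φ j, x * (realization H φ x - α))^2
      ≤ 4 * (vp H φ j)^2 * risk H α φ := by
    intro j
    have key := sq_setint_le (φ := φ) (α := α) (actSet H φ j) (meas_actSet j) (actSet_subset j)
      continuous_id 1 (fun x hx => by
        simp only [id_eq]
        nlinarith [hx.1, hx.2])
    calc (2 * vp H φ j * ∫ x in actSet H φ j, x * (realization H φ x - α))^2
        = 4 * (vp H φ j)^2 * (∫ x in actSet H φ j, x * (realization H φ x - α))^2 := by ring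
      _ ≤ 4 * (vp H φ j)^2 * (1 * risk H α φ) :=
          mul_le_mul_of_nonneg_left (by simpa using key) (by positivity)
      _ = 4 * (vp H φ j)^2 * risk H α φ := by ring
  have bb : ∀ j : Fin H, (2 * vp H φ j * ∫ x in actSet H φ j, (realization H φ x - α))^2
      ≤ 4 * (vp H φ j)^2 * risk H α φ := by
    intro j
    have key := sq_setint_le (φ := φ) (α := α) (actSet H φ j) (meas_actSet j) (actSet_subset j)
      (g := fun _ => (1:ℝ)) continuous_const 1 (fun x _ => by norm_num)
    simp only [one_mul] at key
    calc (2 * vp H φ j * ∫ x in actSet H φ j, (realization H φ x - α))^2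
        = 4 * (vp H φ j)^2 * (∫ x in actSet H φ j, (realization H φ x - α))^2 := by ring
      _ ≤ 4 * (vp H φ j)^2 * (1 * risk H α φ) :=
          mul_le_mul_of_nonneg_left (by simpa using key) (by positivity)
      _ = 4 * (vp H φ j)^2 * risk H α φ := by ring
  have bv : ∀ j : Fin H, (2 * ∫ x in (0:ℝ)..1,
        max (wp H φ j * x + bp H φ j) 0 * (realization H φ x - α))^2
      ≤ 4 * (2 * (wp H φ j)^2 + 2 * (bp H φ j)^2) * risk H α φ := by
    intro j
    have key := sq_setint_le (φ := φ) (α := α) (Set.Icc (0:ℝ) 1) measurableSet_Icc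
      (subset_refl _)
      ((((continuous_const.mul continuous_id).add continuous_const).max continuous_const))
      (2 * (wp H φ j)^2 + 2 * (bp H φ j)^2)
      (fun x hx => by
        have h1 : max (wp H φ j * x + bp H φ j) 0 ^ 2 ≤ (wp H φ j * x + bp H φ j)^2 := by
          rcases le_total (wp H φ j * x + bp H φ j) 0 with h | h
          · rw [max_eq_right h]; simpa using sq_nonneg (wp H φ j * x + bp H φ j)
          · rw [max_eq_left h]
        have h2 : (wp H φ j * x + bp H φ j)^2 ≤ 2 * (wp H φ j)^2 + 2 * (bp H φ j)^2 := by
          have hx2 : x^2 ≤ 1 := by nlinarith [hx.1, hx.2]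
          have hw2 : (wp H φ j)^2 * x^2 ≤ (wp H φ j)^2 :=
            mul_le_of_le_one_right (sq_nonneg _) hx2
          nlinarith [sq_nonneg (wp H φ j * x - bp H φ j)]
        exact le_trans h1 h2)
    rw [interval_to_Icc]
    calc (2 * ∫ x in Set.Icc (0:ℝ) 1, max (wp H φ j * x + bp H φ j) 0 * (realization H φ x - α))^2
        = 4 * (∫ x in Set.Icc (0:ℝ) 1,
            max (wp H φ j * x + bp H φ j) 0 * (realization H φ x - α))^2 := by ring
      _ ≤ 4 * ((2 * (wp H φ j)^2 + 2 * (bp H φ j)^2) * risk H α φ) :=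
          mul_le_mul_of_nonneg_left key (by norm_num)
      _ = 4 * (2 * (wp H φ j)^2 + 2 * (bp H φ j)^2) * risk H α φ := by ring
  have bc : (2 * ∫ x in (0:ℝ)..1, (realization H φ x - α))^2 ≤ 4 * risk H α φ := by
    have key := sq_setint_le (φ := φ) (α := α) (Set.Icc (0:ℝ) 1) measurableSet_Icc
      (subset_refl _) (g := fun _ => (1:ℝ)) continuous_const 1 (fun x _ => by norm_num)
    simp only [one_mul] at key
    rw [interval_to_Icc]
    calc (2 * ∫ x in Set.Icc (0:ℝ) 1, (realization H φ x - α))^2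
        = 4 * (∫ x in Set.Icc (0:ℝ) 1, (realization H φ x - α))^2 := by ring
      _ ≤ 4 * risk H α φ := by nlinarith [key]
  have hsum : ‖φ‖^2 = (∑ j : Fin H, (wp H φ j)^2) + (∑ j : Fin H, (bp H φ j)^2)
      + (∑ j : Fin H, (vp H φ j)^2) + (cp H φ)^2 := by
    rw [hnorm, fin_sum_split H (fun i => (φ i)^2)]; rfl
  have s1 : ∑ j : Fin H, (2 * vp H φ j * ∫ x in actSet H φ j, x * (realization H φ x - α))^2
      ≤ ∑ j : Fin H, 4 * (vp H φ j)^2 * risk H α φ := Finset.sum_le_sum fun j _ => bw j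
  have s2 : ∑ j : Fin H, (2 * vp H φ j * ∫ x in actSet H φ j, (realization H φ x - α))^2
      ≤ ∑ j : Fin H, 4 * (vp H φ j)^2 * risk H α φ := Finset.sum_le_sum fun j _ => bb j
  have s3 : ∑ j : Fin H, (2 * ∫ x in (0:ℝ)..1,
        max (wp H φ j * x + bp H φ j) 0 * (realization H φ x - α))^2
      ≤ ∑ j : Fin H, 4 * (2 * (wp H φ j)^2 + 2 * (bp H φ j)^2) * risk H α φ :=
    Finset.sum_le_sum fun j _ => bv j
  have sumfold : ∀ g : Fin H → ℝ, ∑ j : Fin H, g j * risk H α φ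
      = (∑ j : Fin H, g j) * risk H α φ := fun g => (Finset.sum_mul _ _ _).symm
  have final : (∑ j : Fin H, 4 * (vp H φ j)^2 * risk H α φ)
      + (∑ j : Fin H, 4 * (vp H φ j)^2 * risk H α φ)
      + (∑ j : Fin H, 4 * (2 * (wp H φ j)^2 + 2 * (bp H φ j)^2) * risk H α φ)
      + 4 * risk H α φ ≤ (8 * ‖φ‖^2 + 4) * risk H α φ := by
    rw [sumfold (fun j => 4 * (vp H φ j)^2), sumfold (fun j => 4 * (2 * (wp H φ j)^2 + 2 * (bp H φ j)^2))]
    have hcoef : (∑ j : Fin H, 4 * (vp H φ j)^2) + (∑ j : Fin H, 4 * (vp H φ j)^2)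
        + (∑ j : Fin H, 4 * (2 * (wp H φ j)^2 + 2 * (bp H φ j)^2)) + 4 ≤ 8 * ‖φ‖^2 + 4 := by
      rw [hsum]
      have e1 : ∑ j : Fin H, 4 * (vp H φ j)^2 = 4 * ∑ j : Fin H, (vp H φ j)^2 := by
        rw [Finset.mul_sum]
      have e2 : ∑ j : Fin H, 4 * (2 * (wp H φ j)^2 + 2 * (bp H φ j)^2)
          = 8 * (∑ j : Fin H, (wp H φ j)^2) + 8 * (∑ j : Fin H, (bp H φ j)^2) := by
        have e : ∀ j : Fin H, 4 * (2 * (wp H φ j)^2 + 2 * (bp H φ j)^2)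
            = 8 * (wp H φ j)^2 + 8 * (bp H φ j)^2 := fun j => by ring
        simp only [e]
        rw [Finset.sum_add_distrib, ← Finset.mul_sum, ← Finset.mul_sum]
      rw [e1, e2]
      nlinarith [sq_nonneg (cp H φ)]
    nlinarith [mul_le_mul_of_nonneg_right hcoef hr0]
  calc (∑ j : Fin H, (2 * vp H φ j * ∫ x in actSet H φ j, x * (realization H φ x - α))^2)
      + (∑ j : Fin H, (2 * vp H φ j * ∫ x in actSet H φ j, (realization H φ x - α))^2)
      + (∑ j : Fin H, (2 * ∫ x in (0:ℝ)..1,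
          max (wp H φ j * x + bp H φ j) 0 * (realization H φ x - α))^2)
      + (2 * ∫ x in (0:ℝ)..1, (realization H φ x - α))^2
      ≤ (∑ j : Fin H, 4 * (vp H φ j)^2 * risk H α φ)
        + (∑ j : Fin H, 4 * (vp H φ j)^2 * risk H α φ)
        + (∑ j : Fin H, 4 * (2 * (wp H φ j)^2 + 2 * (bp H φ j)^2) * risk H α φ)
        + 4 * risk H α φ := by
          exact add_le_add (add_le_add (add_le_add s1 s2) s3) bc
    _ ≤ (8 * ‖φ‖^2 + 4) * risk H α φ := final

theorem lyap_nonneg : 0 ≤ lyap H α φ := by unfold lyap; positivity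

theorem cp_sq_le : (cp H φ)^2 ≤ ‖φ‖^2 := by
  have hnorm : ‖φ‖^2 = ∑ i, (φ i)^2 := by
    rw [EuclideanSpace.real_norm_sq_eq]
  rw [hnorm]
  exact Finset.single_le_sum (f := fun i => (φ i)^2) (fun i _ => sq_nonneg _)
    (Finset.mem_univ (⟨3*H, by omega⟩ : Fin (3*H+1)))

theorem lyap_le : lyap H α φ ≤ 3 * ‖φ‖^2 + 8 * α^2 := by
  have h := cp_sq_le (H := H) (φ := φ)
  unfold lyap
  nlinarith [sq_nonneg (cp H φ + 2*α)]

theorem descent {γ : ℝ} (hγ0 : 0 ≤ γ) (hγ1 : γ * (4 * lyap H α φ + 2) ≤ 1) :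
    lyap H α (φ - γ • grad H α φ) ≤ lyap H α φ - 4 * γ * risk H α φ := by
  set G := grad H α φ with hG
  have hcp : cp H (φ - γ • G) = cp H φ - γ * G ⟨3*H, by omega⟩ := by
    unfold cp; simp
  have hns : ‖φ - γ • G‖^2 = ‖φ‖^2 - 2 * (γ * (inner ℝ φ G : ℝ)) + γ^2 * ‖G‖^2 := by
    rw [norm_sub_sq_real, real_inner_smul_right, norm_smul]
    simp [mul_pow, sq_abs]
  have hGc : (G ⟨3*H, by omega⟩)^2 ≤ ‖G‖^2 := by
    have hnorm : ‖G‖^2 = ∑ i, (G i)^2 := by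
      rw [EuclideanSpace.real_norm_sq_eq]
    rw [hnorm]
    exact Finset.single_le_sum (f := fun i => (G i)^2) (fun i _ => sq_nonneg _)
      (Finset.mem_univ (⟨3*H, by omega⟩ : Fin (3*H+1)))
  have hkey : 2 * (inner ℝ φ G : ℝ) + 2 * (cp H φ - 2*α) * G ⟨3*H, by omega⟩
      = 8 * risk H α φ := inner_grad_eq
  have hGn : ‖G‖^2 ≤ (8 * ‖φ‖^2 + 4) * risk H α φ := grad_norm_sq_le
  have hexp : lyap H α (φ - γ • G) = lyap H α φ
      - γ * (2 * (inner ℝ φ G : ℝ) + 2 * (cp H φ - 2*α) * G ⟨3*H, by omega⟩)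
      + γ^2 * (‖G‖^2 + (G ⟨3*H, by omega⟩)^2) := by
    unfold lyap
    rw [hcp, hns]
    ring
  rw [hexp, hkey]
  have hφl : ‖φ‖^2 ≤ lyap H α φ := le_add_of_nonneg_right (sq_nonneg _)
  have hr0 : 0 ≤ risk H α φ := risk_nonneg
  have hb : γ^2 * (‖G‖^2 + (G ⟨3*H, by omega⟩)^2) ≤ 4 * γ * risk H α φ := by
    have h1 : ‖G‖^2 + (G ⟨3*H, by omega⟩)^2 ≤ 2 * ((8 * ‖φ‖^2 + 4) * risk H α φ) := by
      nlinarith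
    have h2 : γ * (8 * ‖φ‖^2 + 4) ≤ 2 := by nlinarith
    nlinarith [sq_nonneg γ, mul_nonneg hγ0 hr0, mul_nonneg (mul_nonneg hγ0 hγ0) hr0,
      mul_nonneg hγ0 (mul_nonneg hγ0 hr0)]
  linarith

theorem risk_cont : Continuous (fun ψ : EuclideanSpace ℝ (Fin (3*H+1)) => risk H α ψ) := by
  unfold risk
  apply intervalIntegral.continuous_parametric_intervalIntegral_of_continuous'
  have hreal : Continuous (Function.uncurry
      (fun (ψ : EuclideanSpace ℝ (Fin (3*H+1))) (x : ℝ) => realization H ψ x)) := by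
    unfold realization cp wp bp vp
    apply Continuous.add
    · exact ((EuclideanSpace.proj (⟨3*H, by omega⟩ : Fin (3*H+1))).continuous).comp
        continuous_fst
    · apply continuous_finset_sum
      intro j _
      have hv : Continuous fun p : (EuclideanSpace ℝ (Fin (3*H+1))) × ℝ =>
          p.1 ⟨2*H + j.1, by omega⟩ :=
        ((EuclideanSpace.proj (⟨2*H + j.1, by omega⟩ : Fin (3*H+1))).continuous).comp
          continuous_fst
      have hw : Continuous fun p : (EuclideanSpace ℝ (Fin (3*H+1))) × ℝ =>
          p.1 ⟨j.1, by omega⟩ :=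
        ((EuclideanSpace.proj (⟨j.1, by omega⟩ : Fin (3*H+1))).continuous).comp
          continuous_fst
      have hb : Continuous fun p : (EuclideanSpace ℝ (Fin (3*H+1))) × ℝ =>
          p.1 ⟨H + j.1, by omega⟩ :=
        ((EuclideanSpace.proj (⟨H + j.1, by omega⟩ : Fin (3*H+1))).continuous).comp
          continuous_fst
      exact hv.mul (((hw.mul continuous_snd).add hb).max continuous_const)
  have hr : Continuous fun p : (EuclideanSpace ℝ (Fin (3*H+1))) × ℝ =>
      realization H p.1 p.2 := hreal
  have h2 : Continuous fun p : (EuclideanSpace ℝ (Fin (3*H+1))) × ℝ =>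
      (realization H p.1 p.2 - α)^2 := (hr.sub continuous_const).pow 2
  exact h2

theorem gd_random_initialization (H : ℕ) (hH : 0 < H) (α : ℝ)
    (c γ : ℝ) (hc : 0 < c) (hγ : 0 < γ)
    (Ω : Type*) [MeasurableSpace Ω] (P : Measure Ω) [IsProbabilityMeasure P]
    (Θ : Ω → ℕ → EuclideanSpace ℝ (Fin (3*H+1)))
    (hmeas : ∀ n : ℕ, Measurable (fun ω => Θ ω n))
    (hinit : ∀ ω : Ω, ∀ i : Fin (3*H+1), Θ ω 0 i ∈ Set.Icc (-c) c)
    (hrec : ∀ (ω : Ω) (n : ℕ), Θ ω (n+1) = Θ ω n - γ • grad H α (Θ ω n))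
    (hγsmall : γ ≤ (12 * c^2 * (3*H+1) + 32 * α^2 + 2)⁻¹) :
    (∀ (ω : Ω) (n : ℕ), ‖Θ ω n‖ ≤ Real.sqrt (3 * c^2 * (3*H+1) + 8 * α^2)) ∧
    (∀ ω : Ω, Filter.Tendsto (fun n => risk H α (Θ ω n)) Filter.atTop (nhds 0)) ∧
    Filter.Tendsto (fun n => ∫ ω, risk H α (Θ ω n) ∂P) Filter.atTop (nhds 0) := by
  set B : ℝ := 3 * c^2 * (3*H+1) + 8 * α^2 with hB
  have hBpos : 0 < B := by positivity
  -- initial bound on the norm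
  have hnorm0 : ∀ ω, ‖Θ ω 0‖^2 ≤ c^2 * (3*H+1) := by
    intro ω
    have hnorm : ‖Θ ω 0‖^2 = ∑ i, (Θ ω 0 i)^2 := by
      rw [EuclideanSpace.real_norm_sq_eq]
    rw [hnorm]
    calc ∑ i, (Θ ω 0 i)^2 ≤ ∑ _i : Fin (3*H+1), c^2 := by
          refine Finset.sum_le_sum fun i _ => ?_
          have h := hinit ω i
          nlinarith [h.1, h.2]
      _ = c^2 * (3*H+1) := by
          rw [Finset.sum_const, Finset.card_univ, Fintype.card_fin]
          push_cast; ring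
  have hlyap0 : ∀ ω, lyap H α (Θ ω 0) ≤ B := by
    intro ω
    calc lyap H α (Θ ω 0) ≤ 3 * ‖Θ ω 0‖^2 + 8 * α^2 := lyap_le
      _ ≤ 3 * (c^2 * (3*H+1)) + 8 * α^2 := by nlinarith [hnorm0 ω]
      _ = B := by rw [hB]; ring
  have hγB : γ * (4 * B + 2) ≤ 1 := by
    have hK : (0:ℝ) < 12 * c^2 * (3*H+1) + 32 * α^2 + 2 := by positivity
    have : 4 * B + 2 ≤ 12 * c^2 * (3*H+1) + 32 * α^2 + 2 := by rw [hB]; nlinarith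
    calc γ * (4 * B + 2) ≤ γ * (12 * c^2 * (3*H+1) + 32 * α^2 + 2) := by nlinarith
      _ ≤ (12 * c^2 * (3*H+1) + 32 * α^2 + 2)⁻¹ * (12 * c^2 * (3*H+1) + 32 * α^2 + 2) := by
          exact mul_le_mul_of_nonneg_right hγsmall hK.le
      _ = 1 := inv_mul_cancel₀ hK.ne'
  -- monotonicity and descent along the trajectory
  have main : ∀ ω n, lyap H α (Θ ω n) ≤ B ∧
      lyap H α (Θ ω (n+1)) ≤ lyap H α (Θ ω n) - 4 * γ * risk H α (Θ ω n) := by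
    intro ω n
    induction n with
    | zero =>
        refine ⟨hlyap0 ω, ?_⟩
        rw [hrec ω 0]
        exact descent hγ.le (by nlinarith [hlyap0 ω, hγB, lyap_nonneg (H:=H) (α:=α) (φ:=Θ ω 0)])
    | succ n ih =>
        have h1 : lyap H α (Θ ω (n+1)) ≤ B := by
          have := ih.2
          have hr := risk_nonneg (H:=H) (α:=α) (φ:=Θ ω n)
          nlinarith [ih.1]
        refine ⟨h1, ?_⟩
        rw [hrec ω (n+1)]
        exact descent hγ.le (by nlinarith [hγB, lyap_nonneg (H:=H) (α:=α) (φ:=Θ ω (n+1))])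
  have hrisk_le : ∀ ω n, risk H α (Θ ω n) ≤ B / (4 * γ) := by
    intro ω n
    have h := (main ω n).2
    have h0 : 0 ≤ lyap H α (Θ ω (n+1)) := lyap_nonneg
    have h1 := (main ω n).1
    rw [le_div_iff₀ (by positivity : (0:ℝ) < 4*γ)]
    nlinarith
  have htend : ∀ ω : Ω, Filter.Tendsto (fun n => risk H α (Θ ω n)) Filter.atTop (nhds 0) := by
    intro ω
    have hsummable : Summable (fun n => risk H α (Θ ω n)) := by
      apply summable_of_sum_range_le (c := B / (4 * γ))
        (fun n => risk_nonneg)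
      intro n
      have hpartial : ∀ m : ℕ, 4 * γ * ∑ k ∈ Finset.range m, risk H α (Θ ω k)
          ≤ lyap H α (Θ ω 0) - lyap H α (Θ ω m) := by
        intro m
        induction m with
        | zero => simp
        | succ m ihm =>
            rw [Finset.sum_range_succ]
            have := (main ω m).2
            nlinarith
      have h0 : 0 ≤ lyap H α (Θ ω n) := lyap_nonneg
      have hp := hpartial n
      have hl0 := hlyap0 ω
      rw [← le_div_iff₀' (by positivity : (0:ℝ) < 4 * γ)] at hp
      calc ∑ k ∈ Finset.range n, risk H α (Θ ω k)
          ≤ (lyap H α (Θ ω 0) - lyap H α (Θ ω n)) / (4 * γ) := hp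
        _ ≤ B / (4 * γ) := by
            rw [div_eq_mul_inv, div_eq_mul_inv]
            exact mul_le_mul_of_nonneg_right (by linarith) (by positivity)
    exact hsummable.tendsto_atTop_zero
  refine ⟨?_, htend, ?_⟩
  · intro ω n
    have h1 : ‖Θ ω n‖^2 ≤ B := le_trans (le_add_of_nonneg_right (sq_nonneg _)) (main ω n).1
    have := Real.sqrt_le_sqrt h1
    calc ‖Θ ω n‖ = Real.sqrt (‖Θ ω n‖^2) := by rw [Real.sqrt_sq (norm_nonneg _)]
      _ ≤ Real.sqrt B := Real.sqrt_le_sqrt h1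
  · have := MeasureTheory.tendsto_integral_of_dominated_convergence
      (F := fun n ω => risk H α (Θ ω n)) (f := fun _ => (0:ℝ)) (bound := fun _ => B / (4*γ))
      (fun n => (risk_cont.measurable.comp (hmeas n)).aestronglyMeasurable)
      (integrable_const (μ := P) (B / (4*γ)))
      (fun n => Filter.Eventually.of_forall fun ω => by
        rw [Real.norm_eq_abs, abs_of_nonneg risk_nonneg]
        exact hrisk_le ω n)
      (Filter.Eventually.of_forall fun ω => htend ω)
    simpa using this
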